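/- For all natural numbers $n_1, n_2 \geq 0$, one has $\sum_{i=1}^{n_1+1} \binom{n_1+n_2+3}{i} \equiv 1 + \binom{n_1+n_2+2}{n_1+1} \pmod{2}$. -/

import Mathlib

lemma aux_sum (m k : ℕ) :
    (∑ i ∈ Finset.Icc 1 k, Nat.choose (m + 1) i) % 2 = (1 + Nat.choose m k) % 2 := by
  induction k with
  | zero => simp
  | succ k ih =>
    rw [Finset.sum_Icc_succ_top (by omega : 1 ≤ k + 1)]
    rw [Nat.choose_succ_succ (m) k]
    simp only [Nat.succ_eq_add_one] at *
    omega
/-- `∑_{i=1}^{n₁+1} (n₁+n₂+3 choose i) ≡ 1 + (n₁+n₂+2 choose n₁+1) (mod 2)`. -/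
theorem sum_choose_congr (n₁ n₂ : ℕ) :
    (∑ i ∈ Finset.Icc 1 (n₁ + 1), Nat.choose (n₁ + n₂ + 3) i) % 2
      = (1 + Nat.choose (n₁ + n₂ + 2) (n₁ + 1)) % 2 := by
  have := aux_sum (n₁ + n₂ + 2) (n₁ + 1)
  exact this
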